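/- Let S be a finite set, π₀, π₁ : ℝ × S → ℝ nonnegative joint densities with π₀(a,s) > 0 for all (a,s), ρ(a,s) = π₁(a,s)/π₀(a,s), t : S → ℝ a deterministic target policy, r : ℝ × S → ℝ with r ≥ 0, ρ̂ : ℝ × S → ℝ with ρ̂ ≥ 0, and B : ℝ × S → ℝ with B ≥ 0 and |ρ̂(a,s) − ρ(a,s)| ≤ B(a,s) for all (a,s). Let K : ℝ → ℝ satisfy R(K) := ∫ K(u)² du < ∞ and κ := ∫ |u|·K(u)² du < ∞, and suppose for each s ∈ S the function a ↦ ρ̂(a,s)²·r(a,s)²·π₀(a,s) is bounded and Lipschitz with constant L. Then for every h > 0, (1/h²)·∑_{s∈S} ∫_ℝ K((a − t(s))/h)²·ρ̂(a,s)²·r(a,s)²·π₀(a,s) da ≤ (R(K)/h)·∑_{s∈S} [ ρ(t(s),s)·r(t(s),s)²·π₁(t(s),s) + r(t(s),s)²·(B(t(s),s)² + 2·B(t(s),s)·ρ(t(s),s))·π₀(t(s),s) ] + |S|·L·κ. -/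

import Mathlib

open MeasureTheory

/-- Continuous-action second-moment bound (Proposition 4, continuous case):
with densities `p0 > 0`, `p1 ≥ 0` on `ℝ × S`, `ρ = p1/p0`, nonnegative rewards
and nonnegative estimated weights with `|rhoHat - ρ| ≤ B` pointwise (`B ≥ 0`),
a kernel `K` with `R(K) = ∫ K² < ∞` and `κ = ∫ |u| K(u)² du < ∞`, and
`a ↦ rhoHat² r² p0` bounded and `L`-Lipschitz for each state, the second
moment of a single kernel-smoothed importance sampling term is bounded by
`(R(K)/h) ∑_s (ρ r² p1 + r² (B² + 2 B ρ) p0)` along the target policy,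
plus `|S| L κ`. -/
theorem stmt_12 {S : Type*} [Fintype S]
    (p0 p1 : ℝ × S → ℝ) (hp0pos : ∀ x, 0 < p0 x) (hp1nonneg : ∀ x, 0 ≤ p1 x)
    (hp0int : ∀ s : S, Integrable (fun a => p0 (a, s)))
    (hp0sum : ∑ s : S, ∫ a, p0 (a, s) = 1)
    (hp1int : ∀ s : S, Integrable (fun a => p1 (a, s)))
    (hp1sum : ∑ s : S, ∫ a, p1 (a, s) = 1)
    (t : S → ℝ) (r : ℝ × S → ℝ) (hr : ∀ x, 0 ≤ r x)
    (rhoHat : ℝ × S → ℝ) (hrhoHat : ∀ x, 0 ≤ rhoHat x)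
    (B : ℝ × S → ℝ) (hB : ∀ x, 0 ≤ B x)
    (hBbound : ∀ x, |rhoHat x - p1 x / p0 x| ≤ B x)
    (K : ℝ → ℝ) (hKmeas : Measurable K)
    (hK2 : Integrable (fun u => (K u) ^ 2))
    (hK2u : Integrable (fun u => |u| * (K u) ^ 2))
    (L : ℝ)
    (hLip : ∀ (s : S) (x y : ℝ),
      |(rhoHat (x, s)) ^ 2 * (r (x, s)) ^ 2 * p0 (x, s)
        - (rhoHat (y, s)) ^ 2 * (r (y, s)) ^ 2 * p0 (y, s)| ≤ L * |x - y|)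
    (hbd : ∀ s : S, ∃ C, ∀ x : ℝ,
      |(rhoHat (x, s)) ^ 2 * (r (x, s)) ^ 2 * p0 (x, s)| ≤ C)
    (h : ℝ) (hh : 0 < h) :
    (1 / h ^ 2) * ∑ s : S, ∫ a, (K ((a - t s) / h)) ^ 2 *
        ((rhoHat (a, s)) ^ 2 * (r (a, s)) ^ 2 * p0 (a, s))
      ≤ ((∫ u, (K u) ^ 2) / h) *
          ∑ s : S, ((p1 (t s, s) / p0 (t s, s)) * (r (t s, s)) ^ 2 * p1 (t s, s)
            + (r (t s, s)) ^ 2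
                * ((B (t s, s)) ^ 2 + 2 * B (t s, s) * (p1 (t s, s) / p0 (t s, s)))
                * p0 (t s, s))
        + (Fintype.card S : ℝ) * L * ∫ u, |u| * (K u) ^ 2 := by
  rcases isEmpty_or_nonempty S with hS | hS
  · simp
  have hh0 : (h : ℝ) ≠ 0 := hh.ne'
  set RK := ∫ u, (K u) ^ 2 with hRKdef
  set κ := ∫ u, |u| * (K u) ^ 2 with hκdef
  set g : S → ℝ → ℝ := fun s a => (rhoHat (a, s)) ^ 2 * (r (a, s)) ^ 2 * p0 (a, s) with hgdef
  have hLnonneg : 0 ≤ L := by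
    obtain ⟨s⟩ := hS
    have h1 := le_trans (abs_nonneg _) (hLip s 0 1)
    simpa using h1
  have hgnonneg : ∀ s a, 0 ≤ g s a := fun s a =>
    mul_nonneg (mul_nonneg (sq_nonneg _) (sq_nonneg _)) (hp0pos (a, s)).le
  have hgcont : ∀ s, Continuous (g s) := by
    intro s
    have : LipschitzWith ⟨L, hLnonneg⟩ (g s) := by
      apply LipschitzWith.of_dist_le_mul
      intro x y
      simp only [Real.dist_eq]; exact hLip s x y
    exact this.continuous
  have hRKnonneg : 0 ≤ RK := integral_nonneg fun u => sq_nonneg _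
  have hκnonneg : 0 ≤ κ := integral_nonneg fun u => mul_nonneg (abs_nonneg _) (sq_nonneg _)
  -- key per-state bound
  have key : ∀ s : S, (∫ a, (K ((a - t s) / h)) ^ 2 * g s a)
      ≤ h * (g s (t s) * RK + L * h * κ) := by
    intro s
    set c := t s with hc
    set F : ℝ → ℝ := fun u => (K u) ^ 2 * g s (c + h * u) with hFdef
    have hFeq : (fun a => (K ((a - c) / h)) ^ 2 * g s a) = fun a => F ((a - c) / h) := by
      funext a
      have : c + h * ((a - c) / h) = a := by field_simp; ring
      simp [hFdef, this]
    have hstep : (∫ a, (K ((a - c) / h)) ^ 2 * g s a) = h * ∫ u, F u := by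
      rw [hFeq]
      have h1 : (∫ a, F ((a - c) / h)) = ∫ x, F (x / h) := by
        exact integral_sub_right_eq_self (fun x => F (x / h)) c
      rw [h1, MeasureTheory.Measure.integral_comp_div F h, abs_of_pos hh, smul_eq_mul]
    obtain ⟨C, hC⟩ := hbd s
    have hFint : Integrable F := by
      have := Integrable.bdd_mul (𝕜 := ℝ) (c := C) hK2
        (((hgcont s).comp (continuous_const.add (continuous_const.mul continuous_id))).aestronglyMeasurable)
        (Filter.Eventually.of_forall fun x => by rw [Real.norm_eq_abs]; exact hC (c + h * x))
      simpa [hFdef, mul_comm] using this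
    have hGint : Integrable (fun u => g s c * (K u) ^ 2 + (L * h) * (|u| * (K u) ^ 2)) :=
      (hK2.const_mul _).add (hK2u.const_mul _)
    have hpt : ∀ u, F u ≤ g s c * (K u) ^ 2 + (L * h) * (|u| * (K u) ^ 2) := by
      intro u
      have h1 : |g s (c + h * u) - g s c| ≤ L * |c + h * u - c| := hLip s _ _
      have h2 : |c + h * u - c| = h * |u| := by
        rw [show c + h * u - c = h * u by ring, abs_mul, abs_of_pos hh]
      rw [h2] at h1
      have h3 : g s (c + h * u) ≤ g s c + L * (h * |u|) := by
        have := (abs_le.mp h1).2; linarith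
      have hK2nn : (0 : ℝ) ≤ (K u) ^ 2 := sq_nonneg _
      calc F u = (K u) ^ 2 * g s (c + h * u) := rfl
        _ ≤ (K u) ^ 2 * (g s c + L * (h * |u|)) := mul_le_mul_of_nonneg_left h3 hK2nn
        _ = g s c * (K u) ^ 2 + (L * h) * (|u| * (K u) ^ 2) := by ring
    have hint : (∫ u, F u) ≤ ∫ u, (g s c * (K u) ^ 2 + (L * h) * (|u| * (K u) ^ 2)) :=
      integral_mono hFint hGint hpt
    have hGval : (∫ u, (g s c * (K u) ^ 2 + (L * h) * (|u| * (K u) ^ 2)))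
        = g s c * RK + L * h * κ := by
      rw [integral_add (hK2.const_mul _) (hK2u.const_mul _),
        integral_const_mul, integral_const_mul]
    rw [hstep]
    have : (∫ u, F u) ≤ g s c * RK + L * h * κ := by rw [← hGval]; exact hint
    exact mul_le_mul_of_nonneg_left this hh.le
  -- pointwise bound on g s (t s)
  have hgbd : ∀ s : S, g s (t s)
      ≤ (p1 (t s, s) / p0 (t s, s)) * (r (t s, s)) ^ 2 * p1 (t s, s)
        + (r (t s, s)) ^ 2
            * ((B (t s, s)) ^ 2 + 2 * B (t s, s) * (p1 (t s, s) / p0 (t s, s)))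
            * p0 (t s, s) := by
    intro s
    set x := ((t s, s) : ℝ × S) with hx
    have hp0 : 0 < p0 x := hp0pos x
    have hρp0 : (p1 x / p0 x) * p0 x = p1 x := div_mul_cancel₀ _ hp0.ne'
    have hρnn : 0 ≤ p1 x / p0 x := div_nonneg (hp1nonneg x) hp0.le
    have hup : rhoHat x ≤ p1 x / p0 x + B x := by
      have := (abs_le.mp (hBbound x)).2; linarith
    have hsq : (rhoHat x) ^ 2 ≤ (p1 x / p0 x + B x) ^ 2 := by
      have := hrhoHat x
      nlinarith
    have hfact : 0 ≤ ((p1 x / p0 x + B x) ^ 2 - (rhoHat x) ^ 2) * (r x) ^ 2 * p0 x :=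
      mul_nonneg (mul_nonneg (sub_nonneg.mpr hsq) (sq_nonneg _)) hp0.le
    have hρ2 : (p1 x / p0 x) * (r x) ^ 2 * p1 x
        = (p1 x / p0 x) ^ 2 * (r x) ^ 2 * p0 x := by
      field_simp
    simp only [hgdef]
    nlinarith [hfact, hρ2]
  -- assemble
  have hsum : (∑ s : S, ∫ a, (K ((a - t s) / h)) ^ 2 * g s a)
      ≤ ∑ s : S, h * (g s (t s) * RK + L * h * κ) :=
    Finset.sum_le_sum fun s _ => key s
  have hrhs : (∑ s : S, h * (g s (t s) * RK + L * h * κ))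
      = h * RK * (∑ s : S, g s (t s)) + (Fintype.card S : ℝ) * (h * (L * h * κ)) := by
    have he : ∀ s : S, h * (g s (t s) * RK + L * h * κ)
        = (h * RK) * g s (t s) + h * (L * h * κ) := fun s => by ring
    rw [Finset.sum_congr rfl fun s _ => he s, Finset.sum_add_distrib, ← Finset.mul_sum,
      Finset.sum_const, Finset.card_univ, nsmul_eq_mul]
  have hinv : (0 : ℝ) ≤ 1 / h ^ 2 := by positivity
  have step1 : (1 / h ^ 2) * (∑ s : S, ∫ a, (K ((a - t s) / h)) ^ 2 * g s a)
      ≤ (RK / h) * (∑ s : S, g s (t s)) + (Fintype.card S : ℝ) * L * κ := by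
    calc (1 / h ^ 2) * (∑ s : S, ∫ a, (K ((a - t s) / h)) ^ 2 * g s a)
        ≤ (1 / h ^ 2) * (∑ s : S, h * (g s (t s) * RK + L * h * κ)) :=
          mul_le_mul_of_nonneg_left hsum hinv
      _ = (RK / h) * (∑ s : S, g s (t s)) + (Fintype.card S : ℝ) * L * κ := by
          rw [hrhs]; field_simp
  refine le_trans step1 ?_
  have : (∑ s : S, g s (t s))
      ≤ ∑ s : S, ((p1 (t s, s) / p0 (t s, s)) * (r (t s, s)) ^ 2 * p1 (t s, s)
          + (r (t s, s)) ^ 2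
              * ((B (t s, s)) ^ 2 + 2 * B (t s, s) * (p1 (t s, s) / p0 (t s, s)))
              * p0 (t s, s)) :=
    Finset.sum_le_sum fun s _ => hgbd s
  have hRKh : 0 ≤ RK / h := div_nonneg hRKnonneg hh.le
  gcongr
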